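/- For a monomial ideal $I \subseteq S$, the expansion of the radical equals the radical of the expansion: $\sqrt{I^*} = (\sqrt{I})^*$. -/

import Mathlib

open MvPolynomial

/-- The monomial ideal of `S = K[x_1,…,x_n]` generated by the monomials `x^a`, `a ∈ A`. -/
noncomputable def monIdeal (K : Type*) [Field K] {n : ℕ} (A : Set (Fin n → ℕ)) :
    Ideal (MvPolynomial (Fin n) K) :=
  Ideal.span ((fun a => ∏ j, (X j : MvPolynomial (Fin n) K) ^ a j) '' A)

/-- The expansion `I^* = ∑_{a ∈ A} P_1^{a(1)} ⋯ P_n^{a(n)} ⊆ S^*` of the monomial ideal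
generated by the monomials `x^a`, `a ∈ A`, with respect to the tuple `(i_1,…,i_n)`;
here `P_j = (x_{j1},…,x_{j i_j})`. -/
noncomputable def expIdeal (K : Type*) [Field K] {n : ℕ} (iv : Fin n → ℕ)
    (A : Set (Fin n → ℕ)) : Ideal (MvPolynomial ((j : Fin n) × Fin (iv j)) K) :=
  ⨆ a ∈ A, ∏ j, (Ideal.span (Set.range fun k : Fin (iv j) =>
      (X ⟨j, k⟩ : MvPolynomial ((j : Fin n) × Fin (iv j)) K))) ^ a j

/-- The `K`-algebra homomorphism `π : S^* → S`, `x_{jk} ↦ x_j`. -/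
noncomputable def piHom (K : Type*) [Field K] {n : ℕ} (iv : Fin n → ℕ) :
    MvPolynomial ((j : Fin n) × Fin (iv j)) K →ₐ[K] MvPolynomial (Fin n) K :=
  aeval fun p => X p.1

namespace ExpAux

variable {K : Type*} [Field K] {n : ℕ} {iv : Fin n → ℕ}

variable {K : Type*} [Field K] {n : ℕ} {iv : Fin n → ℕ}

def Dg (iv : Fin n → ℕ) (u : ((j : Fin n) × Fin (iv j)) →₀ ℕ) : Fin n → ℕ :=
  fun j => ∑ k, u ⟨j, k⟩

lemma Dg_add (u v) : Dg iv (u + v) = Dg iv u + Dg iv v := by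
  funext j; simp [Dg, Finset.sum_add_distrib]

lemma Dg_single (j0 : Fin n) (k0 : Fin (iv j0)) (m : ℕ) (j : Fin n) :
    Dg iv (Finsupp.single ⟨j0, k0⟩ m) j = if j = j0 then m else 0 := by
  unfold Dg
  rcases eq_or_ne j j0 with rfl | h
  · simp [Finsupp.single_apply, Sigma.mk.inj_iff]
  · simp [Finsupp.single_apply, Sigma.mk.inj_iff, Ne.symm h, h]

noncomputable def P (K : Type*) [Field K] (iv : Fin n → ℕ) (j : Fin n) :
    Ideal (MvPolynomial ((j : Fin n) × Fin (iv j)) K) :=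
  Ideal.span (Set.range fun k : Fin (iv j) =>
    (X ⟨j, k⟩ : MvPolynomial ((j : Fin n) × Fin (iv j)) K))

noncomputable def M (K : Type*) [Field K] (iv : Fin n → ℕ) (b : Fin n → ℕ) :
    Ideal (MvPolynomial ((j : Fin n) × Fin (iv j)) K) :=
  Ideal.span ((fun u => monomial u (1 : K)) '' {u | ∀ j, b j ≤ Dg iv u j})

lemma monomial_mem_M {b : Fin n → ℕ} {u} (h : ∀ j, b j ≤ Dg iv u j) (t : K) :
    monomial u t ∈ M K iv b := by
  have h1 : monomial u (1 : K) ∈ M K iv b := Ideal.subset_span ⟨u, h, rfl⟩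
  have h2 : monomial u t = C t * monomial u 1 := by rw [C_mul_monomial, mul_one]
  rw [h2]
  exact Ideal.mul_mem_left _ _ h1

lemma M_zero : M K iv 0 = ⊤ := by
  rw [Ideal.eq_top_iff_one]
  have h : (1 : MvPolynomial ((j : Fin n) × Fin (iv j)) K) = monomial 0 1 := by rfl
  rw [h]
  exact monomial_mem_M (fun j => Nat.zero_le _) 1

lemma M_mul (b c : Fin n → ℕ) : M K iv b * M K iv c ≤ M K iv (b + c) := by
  unfold M
  rw [Ideal.span_mul_span, Ideal.span_le]
  intro x hx
  rw [Set.mem_mul] at hx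
  obtain ⟨y, hy, z, hz, rfl⟩ := hx
  obtain ⟨u, hu, rfl⟩ := hy
  obtain ⟨v, hv, rfl⟩ := hz
  have h2 : (monomial u (1:K)) * monomial v 1 = monomial (u + v) 1 := by
    rw [monomial_mul, one_mul]
  rw [h2]
  exact Ideal.subset_span ⟨u + v, fun j => by
    rw [Dg_add]; exact add_le_add (hu j) (hv j), rfl⟩

lemma P_le (j : Fin n) : P K iv j ≤ M K iv (Pi.single j 1) := by
  rw [P, Ideal.span_le]
  rintro _ ⟨k, rfl⟩
  have h : (X (⟨j, k⟩ : (j : Fin n) × Fin (iv j)) : MvPolynomial ((j : Fin n) × Fin (iv j)) K)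
      = monomial (Finsupp.single ⟨j, k⟩ 1) 1 := rfl
  show (X (⟨j, k⟩ : (j : Fin n) × Fin (iv j)) : MvPolynomial ((j : Fin n) × Fin (iv j)) K)
      ∈ M K iv (Pi.single j 1)
  rw [h]
  refine monomial_mem_M (fun j' => ?_) 1
  rw [Dg_single]
  rcases eq_or_ne j' j with rfl | hne
  · simp
  · simp [hne, Pi.single_apply]

set_option maxHeartbeats 800000 in
lemma P_pow_le (j : Fin n) (m : ℕ) : P K iv j ^ m ≤ M K iv (Pi.single j m) := by
  induction m with
  | zero => rw [pow_zero, Ideal.one_eq_top, Pi.single_zero, M_zero]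
  | succ m ih =>
    rw [pow_succ]
    refine le_trans (Ideal.mul_mono ih (P_le j)) (le_trans (M_mul _ _) (le_of_eq ?_))
    rw [← Pi.single_add]

variable {K : Type*} [Field K] {n : ℕ} {iv : Fin n → ℕ}

set_option maxHeartbeats 800000 in
lemma prod_P_le (b : Fin n → ℕ) : (∏ j, P K iv j ^ b j) ≤ M K iv b := by
  have key : ∀ s : Finset (Fin n),
      (∏ j ∈ s, P K iv j ^ b j) ≤ M K iv (∑ j ∈ s, (Pi.single j (b j) : Fin n → ℕ)) := by
    intro s
    induction s using Finset.induction with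
    | empty => simp [M_zero]
    | insert j s2 hj ih =>
      rw [Finset.prod_insert hj, Finset.sum_insert hj]
      exact le_trans (Ideal.mul_mono (P_pow_le j (b j)) ih) (M_mul _ _)
  have h := key Finset.univ
  rwa [Finset.univ_sum_single] at h

set_option maxHeartbeats 1000000 in
lemma monomial_mem_prodP : ∀ (N : ℕ) (b : Fin n → ℕ), ∑ j, b j = N →
    ∀ u, (∀ j, b j ≤ Dg iv u j) → monomial u (1 : K) ∈ ∏ j, P K iv j ^ b j := by
  intro N
  induction N with
  | zero =>
    intro b hb u _
    have hb0 : ∀ j, b j = 0 := fun j =>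
      (Finset.sum_eq_zero_iff).mp hb j (Finset.mem_univ j)
    simp [hb0, Ideal.top_pow]
  | succ N ih =>
    intro b hb u hu
    have hex : ∃ j0, 0 < b j0 := by
      by_contra h
      push_neg at h
      simp only [Nat.le_zero] at h
      simp [h] at hb
    obtain ⟨j0, hj0⟩ := hex
    have hD : 0 < Dg iv u j0 := lt_of_lt_of_le hj0 (hu j0)
    have hex2 : ∃ k0 : Fin (iv j0), 0 < u ⟨j0, k0⟩ := by
      by_contra h
      push_neg at h
      simp only [Nat.le_zero] at h
      simp [Dg, h] at hD
    obtain ⟨k0, hk0⟩ := hex2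
    set s0 : (j : Fin n) × Fin (iv j) := ⟨j0, k0⟩ with hs0
    have hsle : Finsupp.single s0 1 ≤ u := by
      rw [Finsupp.single_le_iff]
      exact hk0
    set u' := u - Finsupp.single s0 1 with hu'
    have huu : u = Finsupp.single s0 1 + u' := (add_tsub_cancel_of_le hsle).symm
    set b' := Function.update b j0 (b j0 - 1) with hb'
    have hsum' : ∑ j, b' j = N := by
      have h1 : ∑ j, b j = b j0 + ∑ j ∈ Finset.univ.erase j0, b j :=
        (Finset.add_sum_erase _ _ (Finset.mem_univ j0)).symm
      have h2 : ∑ j, b' j = b' j0 + ∑ j ∈ Finset.univ.erase j0, b' j :=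
        (Finset.add_sum_erase _ _ (Finset.mem_univ j0)).symm
      have h3 : ∑ j ∈ Finset.univ.erase j0, b' j = ∑ j ∈ Finset.univ.erase j0, b j :=
        Finset.sum_congr rfl fun j hj =>
          Function.update_of_ne (Finset.ne_of_mem_erase hj) _ _
      have h4 : b' j0 = b j0 - 1 := Function.update_self _ _ _
      omega
    have hDg' : ∀ j, b' j ≤ Dg iv u' j := by
      intro j
      have h5 : Dg iv u j = Dg iv (Finsupp.single s0 1) j + Dg iv u' j := by
        rw [huu, Dg_add]; rfl
      rw [hs0, Dg_single] at h5
      rcases eq_or_ne j j0 with rfl | h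
      · rw [if_pos rfl] at h5
        have h6 := hu j
        rw [hb', Function.update_self]
        omega
      · rw [hb', Function.update_of_ne h]
        have h6 := hu j
        rw [if_neg h] at h5
        omega
    have hmem' := ih b' hsum' u' hDg'
    have hpow : P K iv j0 ^ (b j0 - 1) * P K iv j0 = P K iv j0 ^ b j0 := by
      rw [← pow_succ, Nat.sub_add_cancel hj0]
    have hprod : (∏ j, P K iv j ^ b j) = P K iv j0 * ∏ j, P K iv j ^ b' j := by
      rw [← Finset.mul_prod_erase _ (fun j => P K iv j ^ b j) (Finset.mem_univ j0),
        ← Finset.mul_prod_erase _ (fun j => P K iv j ^ b' j) (Finset.mem_univ j0)]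
      have h3 : ∏ j ∈ Finset.univ.erase j0, P K iv j ^ b' j
          = ∏ j ∈ Finset.univ.erase j0, P K iv j ^ b j :=
        Finset.prod_congr rfl fun j hj => by
          rw [hb', Function.update_of_ne (Finset.ne_of_mem_erase hj)]
      rw [h3, hb', Function.update_self, ← hpow]
      ring
    rw [hprod]
    have hX : (X s0 : MvPolynomial ((j : Fin n) × Fin (iv j)) K) ∈ P K iv j0 :=
      Ideal.subset_span ⟨k0, rfl⟩
    have hmono : monomial u (1 : K) = X s0 * monomial u' 1 := by
      have hXm : (X s0 : MvPolynomial ((j : Fin n) × Fin (iv j)) K)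
          = monomial (Finsupp.single s0 1) 1 := rfl
      rw [hXm, monomial_mul, one_mul, ← huu]
    rw [hmono]
    exact Ideal.mul_mem_mul hX hmem'

lemma prodP_eq (b : Fin n → ℕ) : (∏ j, P K iv j ^ b j) = M K iv b := by
  refine le_antisymm (prod_P_le b) ?_
  rw [M, Ideal.span_le]
  rintro _ ⟨u, hu, rfl⟩
  exact monomial_mem_prodP _ b rfl u hu


lemma prod_X_pow_eq (a : Fin n → ℕ) :
    (∏ j, (X j : MvPolynomial (Fin n) K) ^ a j) =
      monomial (Finsupp.equivFunOnFinite.symm a) 1 := by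
  rw [monomial_eq, C_1, one_mul, Finsupp.prod_pow]
  simp

lemma mem_monIdeal {A : Set (Fin n → ℕ)} {p : MvPolynomial (Fin n) K} :
    p ∈ monIdeal K A ↔ ∀ s ∈ p.support, ∃ a ∈ A, ∀ j, a j ≤ s j := by
  have h : monIdeal K A = Ideal.span ((fun s => monomial s (1 : K)) ''
      (Finsupp.equivFunOnFinite.symm '' A)) := by
    unfold monIdeal
    rw [← Set.image_comp]
    exact congrArg _ (Set.image_congr fun a _ => prod_X_pow_eq a)
  rw [h, mem_ideal_span_monomial_image]
  refine forall₂_congr fun s hs => ⟨?_, ?_⟩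
  · rintro ⟨si, ⟨a, ha, rfl⟩, hle⟩
    exact ⟨a, ha, fun j => by simpa using Finsupp.le_def.mp hle j⟩
  · rintro ⟨a, ha, hle⟩
    exact ⟨_, ⟨a, ha, rfl⟩, Finsupp.le_def.mpr fun j => by simpa using hle j⟩

lemma Dg_smul (k : ℕ) (u) (j) : Dg iv (k • u) j = k * Dg iv u j := by
  simp [Dg, Finset.mul_sum]

lemma exists_C {A C : Set (Fin n → ℕ)} (hC : monIdeal K C = (monIdeal K A).radical)
    {d : Fin n → ℕ} (k : ℕ) (hk : 0 < k) (a : Fin n → ℕ) (ha : a ∈ A)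
    (hle : ∀ j, a j ≤ k * d j) : ∃ c ∈ C, ∀ j, c j ≤ d j := by
  classical
  have hmem : monomial (Finsupp.equivFunOnFinite.symm d) (1 : K) ∈ monIdeal K C := by
    rw [hC, Ideal.mem_radical_iff]
    refine ⟨k, ?_⟩
    rw [monomial_pow, one_pow, mem_monIdeal]
    intro s hs
    rw [MvPolynomial.support_monomial, if_neg one_ne_zero, Finset.mem_singleton] at hs
    subst hs
    refine ⟨a, ha, fun j => ?_⟩
    simpa using hle j
  rw [mem_monIdeal] at hmem
  obtain ⟨c, hc, hcle⟩ := hmem _ (by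
    rw [MvPolynomial.support_monomial, if_neg one_ne_zero]
    exact Finset.mem_singleton_self _)
  exact ⟨c, hc, fun j => by simpa using hcle j⟩

lemma exists_k {A C : Set (Fin n → ℕ)} (hC : monIdeal K C = (monIdeal K A).radical)
    {c : Fin n → ℕ} (hc : c ∈ C) :
    ∃ k, 0 < k ∧ ∃ a ∈ A, ∀ j, a j ≤ k * c j := by
  classical
  have h1 : monomial (Finsupp.equivFunOnFinite.symm c) (1 : K) ∈ monIdeal K C := by
    rw [← prod_X_pow_eq]
    exact Ideal.subset_span ⟨c, hc, rfl⟩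
  rw [hC, Ideal.mem_radical_iff] at h1
  obtain ⟨m, hm⟩ := h1
  rcases Nat.eq_zero_or_pos m with rfl | hmpos
  · rw [pow_zero, mem_monIdeal] at hm
    obtain ⟨a, ha, hale⟩ := hm 0 (MvPolynomial.mem_support_iff.mpr (by simp))
    refine ⟨1, one_pos, a, ha, fun j => ?_⟩
    have := hale j
    simp only [Finsupp.coe_zero, Pi.zero_apply, Nat.le_zero] at this
    omega
  · rw [monomial_pow, one_pow, mem_monIdeal] at hm
    obtain ⟨a, ha, hale⟩ := hm _ (by
      rw [MvPolynomial.support_monomial, if_neg one_ne_zero]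
      exact Finset.mem_singleton_self _)
    refine ⟨m, hmpos, a, ha, fun j => ?_⟩
    simpa using hale j

variable {K : Type*} [Field K] {n : ℕ} {iv : Fin n → ℕ}

lemma expIdeal_eq (A : Set (Fin n → ℕ)) :
    expIdeal K iv A = Ideal.span ((fun u => monomial u (1 : K)) ''
      {u | ∃ a ∈ A, ∀ j, a j ≤ Dg iv u j}) := by
  unfold expIdeal
  have h1 : (⨆ a ∈ A, ∏ j, (Ideal.span (Set.range fun k : Fin (iv j) =>
      (X ⟨j, k⟩ : MvPolynomial ((j : Fin n) × Fin (iv j)) K))) ^ a j)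
      = ⨆ a ∈ A, Ideal.span ((fun u => monomial u (1 : K)) '' {u | ∀ j, a j ≤ Dg iv u j}) :=
    iSup_congr fun a => iSup_congr fun _ => prodP_eq a
  rw [h1]
  refine le_antisymm (iSup₂_le fun a ha => Ideal.span_mono ?_) (Ideal.span_le.mpr ?_)
  · rintro _ ⟨u, hu, rfl⟩
    exact ⟨u, ⟨a, ha, hu⟩, rfl⟩
  · rintro _ ⟨u, ⟨a, ha, hu⟩, rfl⟩
    exact (le_iSup₂ (f := fun (a : Fin n → ℕ) (_ : a ∈ A) =>
        Ideal.span ((fun u => (monomial u (1 : K))) '' {u | ∀ j, a j ≤ Dg iv u j})) a ha)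
      (Ideal.subset_span ⟨u, hu, rfl⟩)

lemma Dg_mono {u v} (h : u ≤ v) : ∀ j, Dg iv u j ≤ Dg iv v j := fun _ =>
  Finset.sum_le_sum fun k _ => Finsupp.le_def.mp h _

lemma mem_expIdeal {A : Set (Fin n → ℕ)} {p : MvPolynomial ((j : Fin n) × Fin (iv j)) K} :
    p ∈ expIdeal K iv A ↔ ∀ u ∈ p.support, ∃ a ∈ A, ∀ j, a j ≤ Dg iv u j := by
  rw [expIdeal_eq, mem_ideal_span_monomial_image]
  refine forall₂_congr fun u hu => ⟨?_, ?_⟩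
  · rintro ⟨si, ⟨a, ha, hsi⟩, hle⟩
    exact ⟨a, ha, fun j => (hsi j).trans (Dg_mono hle j)⟩
  · intro h
    exact ⟨u, h, le_rfl⟩

lemma pow_coeff_max {σ : Type*} [DecidableEq σ] [LinearOrder σ] (p : MvPolynomial σ K)
    (u0 : σ →₀ ℕ) (hmax : ∀ v ∈ p.support, toLex v ≤ toLex u0) (k : ℕ) :
    (∀ v ∈ (p ^ k).support, toLex v ≤ toLex (k • u0)) ∧
      (p ^ k).coeff (k • u0) = (p.coeff u0) ^ k := by
  induction k with
  | zero =>
    constructor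
    · intro v hv
      rw [pow_zero] at hv
      have h1 : v = 0 := by
        have h2 := MvPolynomial.mem_support_iff.mp hv
        by_contra h
        rw [MvPolynomial.coeff_one, if_neg fun he => h he.symm] at h2
        exact h2 rfl
      simp [h1]
    · simp
  | succ k ih =>
    have hsmul : (k + 1) • u0 = k • u0 + u0 := succ_nsmul u0 k
    constructor
    · intro v hv
      rw [pow_succ] at hv
      obtain ⟨a, ha, b, hb, rfl⟩ := Finset.mem_add.mp (MvPolynomial.support_mul _ _ hv)
      rw [hsmul, toLex_add, toLex_add]
      exact add_le_add (ih.1 a ha) (hmax b hb)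
    · rw [pow_succ, hsmul, MvPolynomial.coeff_mul]
      rw [Finset.sum_eq_single_of_mem (k • u0, u0) (by simp)]
      · rw [ih.2, pow_succ]
      · rintro ⟨x1, x2⟩ hx hne
        by_contra h0
        have hx1 : x1 ∈ (p ^ k).support := by
          rw [MvPolynomial.mem_support_iff]
          intro h; rw [h, zero_mul] at h0; exact h0 rfl
        have hx2 : x2 ∈ p.support := by
          rw [MvPolynomial.mem_support_iff]
          intro h; rw [h, mul_zero] at h0; exact h0 rfl
        have hsum : x1 + x2 = k • u0 + u0 := Finset.HasAntidiagonal.mem_antidiagonal.mp hx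
        have h1 : toLex x1 ≤ toLex (k • u0) := ih.1 x1 hx1
        have h2 : toLex x2 ≤ toLex u0 := hmax x2 hx2
        have heq : toLex x1 + toLex x2 = toLex (k • u0) + toLex u0 := by
          rw [← toLex_add, ← toLex_add, hsum]
        have hx1e : toLex x1 = toLex (k • u0) := by
          rcases lt_or_eq_of_le h1 with hlt | he
          · exfalso
            have := add_lt_add_of_lt_of_le hlt h2
            rw [heq] at this
            exact lt_irrefl _ this
          · exact he
        have hx2e : toLex x2 = toLex u0 := by
          have := heq
          rw [hx1e] at this
          exact add_left_cancel this
        exact hne (Prod.ext (toLex.injective hx1e) (toLex.injective hx2e))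


end ExpAux

/-- Lemma 1.1(vi): `√(I^*) = (√I)^*`: if the monomial ideal generated by the monomials
`x^c`, `c ∈ C`, equals `√I`, then its expansion is the radical of `I^*`. -/
theorem expIdeal_radical (K : Type*) [Field K] {n : ℕ} (iv : Fin n → ℕ)
    (hiv : ∀ j, 0 < iv j) (A C : Set (Fin n → ℕ))
    (hC : monIdeal K C = (monIdeal K A).radical) :
    expIdeal K iv C = (expIdeal K iv A).radical := by
  classical
  refine le_antisymm ?_ ?_
  · -- expIdeal C ≤ radical (expIdeal A)
    rw [ExpAux.expIdeal_eq, Ideal.span_le]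
    rintro _ ⟨u, ⟨c, hcC, hcle⟩, rfl⟩
    obtain ⟨k, hkpos, a, ha, hale⟩ := ExpAux.exists_k hC hcC
    rw [SetLike.mem_coe, Ideal.mem_radical_iff]
    refine ⟨k, ?_⟩
    rw [monomial_pow, one_pow, ExpAux.mem_expIdeal]
    intro v hv
    rw [MvPolynomial.support_monomial, if_neg one_ne_zero, Finset.mem_singleton] at hv
    subst hv
    refine ⟨a, ha, fun j => ?_⟩
    rw [ExpAux.Dg_smul]
    exact le_trans (hale j) (Nat.mul_le_mul_left k (hcle j))
  · -- radical (expIdeal A) ≤ expIdeal C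
    have main : ∀ (m : ℕ) (p : MvPolynomial ((j : Fin n) × Fin (iv j)) K),
        p.support.card ≤ m → p ∈ (expIdeal K iv A).radical → p ∈ expIdeal K iv C := by
      intro m
      induction m with
      | zero =>
        intro p hcard _
        have h0 : p = 0 := by
          have := Finset.card_eq_zero.mp (Nat.le_zero.mp hcard)
          by_contra h
          exact (MvPolynomial.support_nonempty.mpr h).ne_empty this
        rw [h0]
        exact Ideal.zero_mem _
      | succ m ih =>
        intro p hcard hp
        by_cases hp0 : p = 0
        · rw [hp0]; exact Ideal.zero_mem _
        letI : LinearOrder ((j : Fin n) × Fin (iv j)) :=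
          LinearOrder.lift' (Fintype.equivFin _) (Fintype.equivFin _).injective
        obtain ⟨u0, hu0, hmax⟩ := Finset.exists_max_image p.support (fun u => toLex u)
          (MvPolynomial.support_nonempty.mpr hp0)
        obtain ⟨k0, hk0⟩ := Ideal.mem_radical_iff.mp hp
        obtain ⟨k, hkpos, hk⟩ : ∃ k, 0 < k ∧ p ^ k ∈ expIdeal K iv A := by
          rcases Nat.eq_zero_or_pos k0 with rfl | h
          · rw [pow_zero] at hk0
            refine ⟨1, one_pos, ?_⟩
            rw [pow_one]
            have htop : expIdeal K iv A = ⊤ := (Ideal.eq_top_iff_one _).mpr hk0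
            rw [htop]; exact Submodule.mem_top
          · exact ⟨k0, h, hk0⟩
        have hlead := ExpAux.pow_coeff_max p u0 hmax k
        have hne : (p ^ k).coeff (k • u0) ≠ 0 := by
          rw [hlead.2]
          exact pow_ne_zero _ (MvPolynomial.mem_support_iff.mp hu0)
        obtain ⟨a, ha, hale⟩ := (ExpAux.mem_expIdeal).mp hk _
          (MvPolynomial.mem_support_iff.mpr hne)
        have hale' : ∀ j, a j ≤ k * ExpAux.Dg iv u0 j := fun j => by
          have := hale j
          rwa [ExpAux.Dg_smul] at this
        obtain ⟨c, hc, hcle⟩ := ExpAux.exists_C hC k hkpos a ha hale'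
        set q := monomial u0 (p.coeff u0) with hq
        have hqC : q ∈ expIdeal K iv C := by
          rw [hq, ExpAux.mem_expIdeal]
          intro v hv
          rw [MvPolynomial.support_monomial,
            if_neg (MvPolynomial.mem_support_iff.mp hu0), Finset.mem_singleton] at hv
          subst hv
          exact ⟨c, hc, hcle⟩
        have hqrad : q ∈ (expIdeal K iv A).radical := by
          rw [Ideal.mem_radical_iff]
          refine ⟨k, ?_⟩
          rw [hq, monomial_pow, ExpAux.mem_expIdeal]
          intro v hv
          rw [MvPolynomial.support_monomial,
            if_neg (pow_ne_zero _ (MvPolynomial.mem_support_iff.mp hu0)),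
            Finset.mem_singleton] at hv
          subst hv
          exact ⟨a, ha, hale⟩
        have hrad' : p - q ∈ (expIdeal K iv A).radical := sub_mem hp hqrad
        have hsub : (p - q).support ⊆ p.support.erase u0 := by
          intro v hv
          rw [MvPolynomial.mem_support_iff, MvPolynomial.coeff_sub, hq,
            MvPolynomial.coeff_monomial] at hv
          rcases eq_or_ne v u0 with rfl | hne2
          · rw [if_pos rfl, sub_self] at hv
            exact absurd rfl hv
          · rw [if_neg fun h => hne2 h.symm, sub_zero] at hv
            exact Finset.mem_erase.mpr ⟨hne2, MvPolynomial.mem_support_iff.mpr hv⟩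
        have hcard' : (p - q).support.card ≤ m := by
          have h1 := Finset.card_le_card hsub
          have h2 : (p.support.erase u0).card < p.support.card :=
            Finset.card_erase_lt_of_mem hu0
          omega
        have hfin : p = (p - q) + q := (sub_add_cancel p q).symm
        rw [hfin]
        exact Ideal.add_mem _ (ih (p - q) hcard' hrad') hqC
    intro p hp
    exact main _ p le_rfl hp
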